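/- If a binary [36,k] code B has minimum weight at least 16 and its dual has minimum weight at least 4, and B is doubly even, then k ≤ 8. -/
import Mathlib

open scoped Classical
set_option maxRecDepth 4000

/-- Hamming weight of a vector over `ZMod 2`. -/
noncomputable def wt (c : Fin 36 → ZMod 2) : ℕ :=
  (Finset.univ.filter fun i => c i ≠ 0).card

/-- sign character -/
def sgn : ZMod 2 → ℤ := fun a => if a = 0 then 1 else -1

lemma sgn_add (a b : ZMod 2) : sgn (a + b) = sgn a * sgn b := by revert a b; decide

lemma sgn_add_one (a : ZMod 2) : sgn (a + 1) = - sgn a := by revert a; decide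

lemma sgn_sum {ι : Type*} (t : Finset ι) (c : ι → ZMod 2) :
    sgn (∑ i ∈ t, c i) = ∏ i ∈ t, sgn (c i) := by
  induction t using Finset.induction_on with
  | empty => simp [sgn]
  | @insert a s h ih => rw [Finset.sum_insert h, Finset.prod_insert h, sgn_add, ih]

lemma zmod2_ne_zero (a : ZMod 2) : a ≠ 0 ↔ a = 1 := by revert a; decide

/-- pointwise product identity -/
lemma prod_one_sub_sgn (S : Finset (Fin 36)) (c : Fin 36 → ZMod 2) :
    ∏ i ∈ S, (1 - sgn (c i)) = if (∀ i ∈ S, c i = 1) then (2 : ℤ) ^ S.card else 0 := by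
  split_ifs with h
  · rw [Finset.prod_congr rfl (fun i hi => ?_), Finset.prod_const]
    rw [h i hi]; decide
  · push_neg at h
    obtain ⟨i, hi, hne⟩ := h
    apply Finset.prod_eq_zero hi
    have h0 : c i = 0 := by revert hne; generalize c i = a; revert a; decide
    rw [h0]; simp [sgn]

lemma prod_expand (S : Finset (Fin 36)) (c : Fin 36 → ZMod 2) :
    ∏ i ∈ S, (1 - sgn (c i)) =
      ∑ y ∈ S.powerset, (-1 : ℤ) ^ y.card * sgn (∑ i ∈ y, c i) := by
  have : ∀ i ∈ S, (1 : ℤ) - sgn (c i) = (- sgn (c i)) + 1 := fun i _ => by ring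
  rw [Finset.prod_congr rfl this, Finset.prod_add]
  refine Finset.sum_congr rfl fun y hy => ?_
  rw [Finset.prod_const_one, mul_one, sgn_sum,
    Finset.prod_congr rfl (fun i (_ : i ∈ y) => neg_eq_neg_one_mul (sgn (c i))),
    Finset.prod_mul_distrib, Finset.prod_const]

section B
variable (B : Submodule (ZMod 2) (Fin 36 → ZMod 2))

noncomputable def Bfin : Finset (Fin 36 → ZMod 2) := Finset.univ.filter (· ∈ B)

lemma mem_Bfin (c : Fin 36 → ZMod 2) : c ∈ Bfin B ↔ c ∈ B := by simp [Bfin]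

/-- character sum over the code -/
lemma zmod2_cancel (a b : ZMod 2) : a + b + b = a := by revert a b; decide

lemma sum_sgn (y : Finset (Fin 36)) :
    ∑ c ∈ Bfin B, sgn (∑ i ∈ y, c i) =
      if (∀ c ∈ B, ∑ i ∈ y, c i = 0) then ((Bfin B).card : ℤ) else 0 := by
  split_ifs with h
  · have h2 : ∀ c ∈ Bfin B, sgn (∑ i ∈ y, c i) = 1 := fun c hc => by
      rw [h c ((mem_Bfin B c).1 hc)]; simp [sgn]
    rw [Finset.sum_congr rfl h2, Finset.sum_const, nsmul_eq_mul, mul_one]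
  · push_neg at h
    obtain ⟨c₀, hc₀, hne⟩ := h
    have h1 : ∑ i ∈ y, c₀ i = 1 := (zmod2_ne_zero _).1 hne
    have hmem : ∀ c ∈ Bfin B, c + c₀ ∈ Bfin B := fun c hc => by
      rw [mem_Bfin] at *; exact B.add_mem hc hc₀
    have hinv : ∀ c : Fin 36 → ZMod 2, c + c₀ + c₀ = c := fun c => by
      funext i; exact zmod2_cancel _ _
    have key : ∑ c ∈ Bfin B, sgn (∑ i ∈ y, c i)
        = ∑ c ∈ Bfin B, - sgn (∑ i ∈ y, c i) := by
      refine Finset.sum_nbij' (fun c => c + c₀) (fun c => c + c₀)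
        (fun a ha => hmem a ha) (fun a ha => hmem a ha)
        (fun a _ => hinv a) (fun a _ => hinv a) (fun a _ => ?_)
      have : ∑ i ∈ y, (a + c₀) i = (∑ i ∈ y, a i) + 1 := by
        rw [← h1, ← Finset.sum_add_distrib]; simp [Pi.add_apply]
      rw [this, sgn_add_one, neg_neg]
    rw [Finset.sum_neg_distrib] at key
    linarith

noncomputable def Ncnt (S : Finset (Fin 36)) : ℕ :=
  ((Bfin B).filter fun c => ∀ i ∈ S, c i = 1).card

lemma expand_count (S : Finset (Fin 36)) :
    (2 : ℤ) ^ S.card * (Ncnt B S : ℤ) =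
      ∑ y ∈ S.powerset, (-1 : ℤ) ^ y.card *
        (if (∀ c ∈ B, ∑ i ∈ y, c i = 0) then ((Bfin B).card : ℤ) else 0) := by
  have lhs : (2 : ℤ) ^ S.card * (Ncnt B S : ℤ)
      = ∑ c ∈ Bfin B, if (∀ i ∈ S, c i = 1) then (2 : ℤ) ^ S.card else 0 := by
    rw [← Finset.sum_filter, Finset.sum_const, nsmul_eq_mul]
    unfold Ncnt
    ring
  rw [lhs]
  calc ∑ c ∈ Bfin B, (if (∀ i ∈ S, c i = 1) then (2 : ℤ) ^ S.card else 0)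
      = ∑ c ∈ Bfin B, ∑ y ∈ S.powerset, (-1 : ℤ) ^ y.card * sgn (∑ i ∈ y, c i) := by
        refine Finset.sum_congr rfl fun c _ => ?_
        rw [← prod_one_sub_sgn, prod_expand]
    _ = ∑ y ∈ S.powerset, (-1 : ℤ) ^ y.card * ∑ c ∈ Bfin B, sgn (∑ i ∈ y, c i) := by
        rw [Finset.sum_comm]
        exact Finset.sum_congr rfl fun y _ => by rw [Finset.mul_sum]
    _ = _ := Finset.sum_congr rfl fun y _ => by rw [sum_sgn]

/-- nonzero small subsets are not in the dual -/
lemma not_dual (hdual : ∀ x : Fin 36 → ZMod 2,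
      (∀ c ∈ B, ∑ i, x i * c i = 0) → x ≠ 0 → 4 ≤ wt x)
    (y : Finset (Fin 36)) (hne : y.Nonempty) (hcard : y.card ≤ 3) :
    ¬ (∀ c ∈ B, ∑ i ∈ y, c i = 0) := by
  intro h
  set x : Fin 36 → ZMod 2 := fun i => if i ∈ y then 1 else 0 with hx
  have hsum : ∀ c : Fin 36 → ZMod 2, ∑ i, x i * c i = ∑ i ∈ y, c i := by
    intro c
    simp only [hx, ite_mul, one_mul, zero_mul, Finset.sum_ite_mem, Finset.univ_inter]
  obtain ⟨i₀, hi₀⟩ := hne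
  have hx0 : x ≠ 0 := by
    intro h0
    have := congrFun h0 i₀
    simp [hx, hi₀] at this
  have hwt : wt x = y.card := by
    unfold wt
    congr 1
    ext i
    by_cases hi : i ∈ y <;> simp [hx, hi]
  have := hdual x (fun c hc => by rw [hsum]; exact h c hc) hx0
  omega

lemma count_small (hdual : ∀ x : Fin 36 → ZMod 2,
      (∀ c ∈ B, ∑ i, x i * c i = 0) → x ≠ 0 → 4 ≤ wt x)
    (S : Finset (Fin 36)) (h3 : S.card ≤ 3) :
    (2 : ℤ) ^ S.card * (Ncnt B S : ℤ) = ((Bfin B).card : ℤ) := by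
  rw [expand_count]
  rw [Finset.sum_eq_single_of_mem ∅ (Finset.empty_mem_powerset S) (fun y hy hyne => ?_)]
  · simp
  · rw [if_neg, mul_zero]
    refine not_dual B hdual y (Finset.nonempty_iff_ne_empty.2 hyne) ?_
    exact le_trans (Finset.card_le_card (Finset.mem_powerset.1 hy)) h3

lemma count_four (hdual : ∀ x : Fin 36 → ZMod 2,
      (∀ c ∈ B, ∑ i, x i * c i = 0) → x ≠ 0 → 4 ≤ wt x)
    (S : Finset (Fin 36)) (h4 : S.card = 4) :
    ((Bfin B).card : ℤ) ≤ 16 * (Ncnt B S : ℤ) := by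
  have hne : (∅ : Finset (Fin 36)) ≠ S := by
    intro h; rw [← h] at h4; simp at h4
  have hsub : ({∅, S} : Finset (Finset (Fin 36))) ⊆ S.powerset := by
    intro y hy
    rcases Finset.mem_insert.1 hy with h | h
    · rw [h]; exact Finset.empty_mem_powerset S
    · rw [Finset.mem_singleton.1 h]; exact Finset.mem_powerset_self S
  have key := expand_count B S
  have hzero : ∀ y ∈ S.powerset, y ∉ ({∅, S} : Finset (Finset (Fin 36))) →
      (-1 : ℤ) ^ y.card *
        (if (∀ c ∈ B, ∑ i ∈ y, c i = 0) then ((Bfin B).card : ℤ) else 0) = 0 := by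
    intro y hy hyn
    have hyS := Finset.mem_powerset.1 hy
    simp only [Finset.mem_insert, Finset.mem_singleton, not_or] at hyn
    obtain ⟨hyne, hyS'⟩ := hyn
    have hlt : y.card < S.card := Finset.card_lt_card (Finset.ssubset_iff_subset_ne.2 ⟨hyS, hyS'⟩)
    have hy3 : y.card ≤ 3 := by rw [h4] at hlt; exact Nat.lt_succ_iff.mp hlt
    rw [if_neg (not_dual B hdual y (Finset.nonempty_iff_ne_empty.2 hyne) hy3), mul_zero]
  rw [← Finset.sum_subset hsub hzero, Finset.sum_pair hne] at key
  have hM : (0:ℤ) ≤ (if (∀ c ∈ B, ∑ i ∈ S, c i = 0) then ((Bfin B).card : ℤ) else 0) := by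
    split_ifs <;> positivity
  simp only [Finset.card_empty, pow_zero, one_mul, h4] at key
  have he : (if (∀ c ∈ B, ∑ i ∈ (∅ : Finset (Fin 36)), c i = 0) then ((Bfin B).card : ℤ) else 0)
      = ((Bfin B).card : ℤ) := by rw [if_pos]; intro c _; simp
  rw [he] at key
  nlinarith [key, hM]

noncomputable def Q (d : ℕ) : ℕ := ∑ c ∈ Bfin B, ((wt c).choose d)

lemma Q_swap (d : ℕ) :
    Q B d = ∑ S ∈ Finset.powersetCard d (Finset.univ : Finset (Fin 36)), Ncnt B S := by
  unfold Q Ncnt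
  have hc : ∀ c : Fin 36 → ZMod 2, (wt c).choose d
      = ∑ S ∈ Finset.powersetCard d (Finset.univ : Finset (Fin 36)),
          (if (∀ i ∈ S, c i = 1) then 1 else 0) := by
    intro c
    rw [← Finset.sum_filter, Finset.sum_const, smul_eq_mul, mul_one]
    have hps : (Finset.powersetCard d (Finset.univ : Finset (Fin 36))).filter
          (fun S => ∀ i ∈ S, c i = 1)
        = Finset.powersetCard d (Finset.univ.filter fun i => c i ≠ 0) := by
      ext S
      simp only [Finset.mem_filter, Finset.mem_powersetCard, Finset.subset_iff,
        Finset.mem_univ, true_and]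
      constructor
      · rintro ⟨⟨_, hcard⟩, hall⟩
        exact ⟨fun {i} hi => by simp [zmod2_ne_zero, hall i hi], hcard⟩
      · rintro ⟨hsub, hcard⟩
        exact ⟨⟨fun {i} _ => trivial, hcard⟩, fun i hi => (zmod2_ne_zero _).1 (hsub hi)⟩
    rw [hps, Finset.card_powersetCard]
    rfl
  rw [Finset.sum_congr rfl fun c _ => hc c, Finset.sum_comm]
  refine Finset.sum_congr rfl fun S _ => ?_
  rw [Finset.card_filter]

lemma Q_small (hdual : ∀ x : Fin 36 → ZMod 2,
      (∀ c ∈ B, ∑ i, x i * c i = 0) → x ≠ 0 → 4 ≤ wt x)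
    (d : ℕ) (h3 : d ≤ 3) :
    (2 : ℤ) ^ d * (Q B d : ℤ) = (Nat.choose 36 d) * ((Bfin B).card : ℤ) := by
  rw [Q_swap]
  push_cast
  rw [Finset.mul_sum]
  rw [Finset.sum_congr rfl (fun S hS => ?_)]
  · rw [Finset.sum_const, nsmul_eq_mul, Finset.card_powersetCard, Finset.card_univ,
      Fintype.card_fin]
  · have hSd : S.card = d := (Finset.mem_powersetCard.1 hS).2
    rw [← hSd]
    exact count_small B hdual S (hSd ▸ h3)

lemma Q_four (hdual : ∀ x : Fin 36 → ZMod 2,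
      (∀ c ∈ B, ∑ i, x i * c i = 0) → x ≠ 0 → 4 ≤ wt x) :
    58905 * ((Bfin B).card : ℤ) ≤ 16 * (Q B 4 : ℤ) := by
  rw [Q_swap]
  push_cast
  rw [Finset.mul_sum]
  have hcard : (Finset.powersetCard 4 (Finset.univ : Finset (Fin 36))).card = 58905 := by
    rw [Finset.card_powersetCard, Finset.card_univ, Fintype.card_fin]
    norm_num [Nat.choose]
  calc (58905 : ℤ) * ((Bfin B).card : ℤ)
      = ∑ _S ∈ Finset.powersetCard 4 (Finset.univ : Finset (Fin 36)), ((Bfin B).card : ℤ) := by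
        rw [Finset.sum_const, nsmul_eq_mul, hcard]; norm_num
    _ ≤ _ := Finset.sum_le_sum fun S hS =>
        count_four B hdual S (Finset.mem_powersetCard.1 hS).2

def F : ℕ → ℤ := fun w => -24 * (w.choose 4 : ℤ) + 540 * (w.choose 3 : ℤ)
  - 6134 * (w.choose 2 : ℤ) + 47259 * (w : ℤ) - 278784

lemma F_nonneg (w : ℕ) (h1 : 16 ≤ w) (h2 : w ≤ 36) : 0 ≤ F w := by
  interval_cases w <;> norm_num [F, Nat.choose]

lemma sum_F : ∑ c ∈ Bfin B, F (wt c) =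
    -24 * (Q B 4 : ℤ) + 540 * (Q B 3 : ℤ) - 6134 * (Q B 2 : ℤ) + 47259 * (Q B 1 : ℤ)
      - 278784 * ((Bfin B).card : ℤ) := by
  unfold F Q
  push_cast
  rw [Finset.sum_congr rfl (fun c (_ : c ∈ Bfin B) => by
    rw [Nat.choose_one_right] :
    ∀ c ∈ Bfin B, -24 * ((wt c).choose 4 : ℤ) + 540 * ((wt c).choose 3 : ℤ)
      - 6134 * ((wt c).choose 2 : ℤ) + 47259 * ((wt c) : ℤ) - 278784
      = -24 * ((wt c).choose 4 : ℤ) + 540 * ((wt c).choose 3 : ℤ)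
      - 6134 * ((wt c).choose 2 : ℤ) + 47259 * ((wt c).choose 1 : ℤ) - 278784)]
  simp only [Finset.sum_add_distrib, Finset.sum_sub_distrib, ← Finset.mul_sum,
    Finset.sum_const, nsmul_eq_mul, mul_one]
  ring

lemma wt_le (c : Fin 36 → ZMod 2) : wt c ≤ 36 := by
  unfold wt
  calc (Finset.univ.filter fun i => c i ≠ 0).card ≤ (Finset.univ : Finset (Fin 36)).card :=
    Finset.card_filter_le _ _
  _ = 36 := by simp

lemma wt_zero : wt (0 : Fin 36 → ZMod 2) = 0 := by
  unfold wt; simp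

lemma sum_F_lb (hmin : ∀ c ∈ B, c ≠ 0 → 16 ≤ wt c) :
    -278784 ≤ ∑ c ∈ Bfin B, F (wt c) := by
  have h0 : (0 : Fin 36 → ZMod 2) ∈ Bfin B := (mem_Bfin B 0).2 B.zero_mem
  rw [← Finset.add_sum_erase _ _ h0, wt_zero]
  have hF0 : F 0 = -278784 := by norm_num [F]
  rw [hF0]
  have : (0:ℤ) ≤ ∑ c ∈ (Bfin B).erase 0, F (wt c) := by
    refine Finset.sum_nonneg fun c hc => ?_
    have hcB := (mem_Bfin B c).1 (Finset.mem_of_mem_erase hc)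
    have hcne : c ≠ 0 := Finset.ne_of_mem_erase hc
    exact F_nonneg (wt c) (hmin c hcB hcne) (wt_le c)
  linarith

end B

theorem stmt3 (k : ℕ) (B : Submodule (ZMod 2) (Fin 36 → ZMod 2))
    (hdim : Module.finrank (ZMod 2) B = k)
    (hde : ∀ c ∈ B, 4 ∣ wt c)
    (hmin : ∀ c ∈ B, c ≠ 0 → 16 ≤ wt c)
    (hdual : ∀ x : Fin 36 → ZMod 2,
      (∀ c ∈ B, ∑ i, x i * c i = 0) → x ≠ 0 → 4 ≤ wt x) :
    k ≤ 8 := by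
  set M : ℕ := (Bfin B).card with hM
  have e1 : (2:ℤ) ^ 1 * (Q B 1 : ℤ) = (Nat.choose 36 1 : ℤ) * (M : ℤ) := Q_small B hdual 1 (by norm_num)
  have e2 : (2:ℤ) ^ 2 * (Q B 2 : ℤ) = (Nat.choose 36 2 : ℤ) * (M : ℤ) := Q_small B hdual 2 (by norm_num)
  have e3 : (2:ℤ) ^ 3 * (Q B 3 : ℤ) = (Nat.choose 36 3 : ℤ) * (M : ℤ) := Q_small B hdual 3 (by norm_num)
  have e4 : 58905 * (M : ℤ) ≤ 16 * (Q B 4 : ℤ) := Q_four B hdual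
  have hc1 : (Nat.choose 36 1 : ℤ) = 36 := by norm_num
  have hc2 : (Nat.choose 36 2 : ℤ) = 630 := by norm_num [Nat.choose]
  have hc3 : (Nat.choose 36 3 : ℤ) = 7140 := by norm_num [Nat.choose]
  rw [hc1] at e1; rw [hc2] at e2; rw [hc3] at e3
  have hT := sum_F B
  have hTlb := sum_F_lb B hmin
  rw [hT] at hTlb
  norm_num at e1 e2 e3
  have hMle : (M : ℤ) ≤ 439 := by linarith
  -- M = 2 ^ k
  have hcard : M = 2 ^ k := by
    have h1 : M = Fintype.card B := by
      rw [hM, Bfin, ← Fintype.card_subtype]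
    rw [h1, ← hdim]
    have := Module.card_eq_pow_finrank (K := ZMod 2) (V := B)
    rwa [ZMod.card] at this
  by_contra hk
  push_neg at hk
  have h9 : (2:ℕ) ^ 9 ≤ 2 ^ k := Nat.pow_le_pow_right (by norm_num) hk
  have : (512 : ℕ) ≤ M := by rw [hcard]; exact h9
  have : (512 : ℤ) ≤ (M : ℤ) := by exact_mod_cast this
  linarith
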